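/- Let C be a category with cofibrations and let i : {0,j} ↪ {α_1 < ... < α_l} be an injection of finite subsets of [n] with 0 and j among the α's. Then the induced functor S_α C → S_{{0,j}} C is an isofibration: for every object A of S_α C and every isomorphism f : A_{0,j} → B in C, there exist an object B' of S_α C and an isomorphism g : A → B' whose (0,j)-component is f. -/

import Mathlib

open CategoryTheory Limits

universe v u

/-- A category with cofibrations in the sense of Waldhausen. -/
structure CategoryWithCofibrations (C : Type u) [Category.{v} C] where
  zero : C
  isZero : IsZero zero
  cof : MorphismProperty C
  cof_from_zero : ∀ {A : C} (f : zero ⟶ A), cof f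
  cof_of_isIso : ∀ {A B : C} (f : A ⟶ B), IsIso f → cof f
  cof_comp : ∀ {A B D : C} (f : A ⟶ B) (g : B ⟶ D), cof f → cof g → cof (f ≫ g)
  cof_pushout : ∀ {A B X : C} (f : A ⟶ B) (g : A ⟶ X), cof f →
    ∃ (P : C) (inl : B ⟶ P) (inr : X ⟶ P), IsPushout f g inl inr ∧ cof inr

variable {C : Type u} [Category.{v} C]

/-- The poset `Ar[n]` of pairs `(i,j)`, `0 ≤ i ≤ j ≤ n`, ordered componentwise. -/
abbrev ArrPoset (n : ℕ) : Type :=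
  {p : Fin (n + 1) × Fin (n + 1) // p.1 ≤ p.2}

/-- The morphism of `Ar[n]` from `(i,j)` to `(i',j')` when `i ≤ i'` and `j ≤ j'`. -/
def arHom {n : ℕ} (a b : ArrPoset n) (h : a.1.1 ≤ b.1.1) (h' : a.1.2 ≤ b.1.2) : a ⟶ b :=
  homOfLE (show a.1 ≤ b.1 from Prod.le_def.mpr ⟨h, h'⟩)

/-- The defining property of the objects of `SₙC`: a functor `Ar[n] ⥤ C` which is zero
on the diagonal and such that `A_{i,j} ↣ A_{i,k} ↠ A_{j,k}` is a cofibration sequence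
for all `i < j < k` (`A_{j,k}` is the pushout of `A_{i,j} ↣ A_{i,k}` along `A_{i,j} → 0`). -/
def IsSFunctor (W : CategoryWithCofibrations C) {n : ℕ} (F : ArrPoset n ⥤ C) : Prop :=
  (∀ j : Fin (n + 1), IsZero (F.obj ⟨(j, j), le_refl j⟩)) ∧
  ∀ (i j k : Fin (n + 1)) (hij : i < j) (hjk : j < k),
    W.cof (F.map (arHom ⟨(i, j), hij.le⟩ ⟨(i, k), (hij.trans hjk).le⟩ (le_refl i) hjk.le)) ∧
    IsPushout
      (F.map (arHom ⟨(i, j), hij.le⟩ ⟨(i, k), (hij.trans hjk).le⟩ (le_refl i) hjk.le))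
      (F.map (arHom ⟨(i, j), hij.le⟩ ⟨(j, j), le_refl j⟩ hij.le (le_refl j)))
      (F.map (arHom ⟨(i, k), (hij.trans hjk).le⟩ ⟨(j, k), hjk.le⟩ hij.le (le_refl k)))
      (F.map (arHom ⟨(j, j), le_refl j⟩ ⟨(j, k), hjk.le⟩ (le_refl j) hjk.le))

/-- The category `SₙC`, as the full subcategory of `Fun(Ar[n], C)` on the `S`-functors. -/
abbrev SCat (W : CategoryWithCofibrations C) (n : ℕ) :=
  ObjectProperty.FullSubcategory (IsSFunctor W (n := n))

/-- A chain of `n - 1` composable cofibrations `A_1 ↣ A_2 ↣ ⋯ ↣ A_n` in `C`. -/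
structure CofChain (W : CategoryWithCofibrations C) (n : ℕ) where
  obj : Fin n → C
  map : ∀ (i : ℕ) (h : i + 1 < n), obj ⟨i, Nat.lt_of_succ_lt h⟩ ⟶ obj ⟨i + 1, h⟩
  cof : ∀ (i : ℕ) (h : i + 1 < n), W.cof (map i h)

/-- The top row `A_{0,1} ↣ A_{0,2} ↣ ⋯ ↣ A_{0,n}` of an object of `SₙC`. -/
def topRow (W : CategoryWithCofibrations C) (n : ℕ) (X : SCat W n) : CofChain W n where
  obj i := X.obj.obj ⟨(0, i.succ), Fin.zero_le _⟩
  map i h := X.obj.map (arHom _ _ (le_refl 0) (by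
    simp only [Fin.succ_mk, Fin.le_def, Fin.val_mk]
    omega))
  cof i h := by
    have := (X.property.2 0 (Fin.succ ⟨i, Nat.lt_of_succ_lt h⟩) (Fin.succ ⟨i + 1, h⟩)
      (by simp [Fin.lt_def]) (by simp [Fin.lt_def])).1
    exact this

/-!
STATEMENT 9: Let `C` be a category with cofibrations and `i : {0,j} ↪ α` an injection of
finite subsets of `[n]` with `0, j ∈ α`.  Then the induced functor `S_α C → S_{0,j} C` is
an isofibration.

Via the order isomorphism `α ≅ [l-1]`, the functor `S_α C → S_{0,j} C ≅ C` is the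
evaluation of an `S`-diagram at the pair `(0, q)`, where `q` is the position of `j` in
`α` (the position of `0` in `α` is `0`, since `0` is the least element).  So the claim
reads: for every object `A` of `SₘC` and every isomorphism `f : A_{0,q} ≅ B` in `C`
there are an object `B'` of `SₘC` and an isomorphism `g : A ≅ B'` whose value under the
evaluation functor is exactly `f`, i.e. `B'_{0,q} = B` and the `(0,q)`-component of `g`
is `f`.
-/


section Aux

variable {D : Type u} [Category.{v} D] {J : Type*} [Category J] [DecidableEq J]

/-- Replace the value of `F` at `p0` by `B`. -/
def modObj (F : J ⥤ D) (p0 : J) (B : D) (p : J) : D :=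
  if p = p0 then B else F.obj p

/-- The pointwise isomorphism `F.obj p ≅ modObj F p0 B p`. -/
def modIso (F : J ⥤ D) (p0 : J) (B : D) (f : F.obj p0 ≅ B) (p : J) :
    F.obj p ≅ modObj F p0 B p :=
  if h : p = p0 then eqToIso (by rw [h]) ≪≫ f ≪≫ eqToIso (by simp [modObj, h])
  else eqToIso (by simp [modObj, h])

/-- The functor obtained from `F` by replacing the value at `p0` by `B`. -/
def modFunctor (F : J ⥤ D) (p0 : J) (B : D) (f : F.obj p0 ≅ B) : J ⥤ D where
  obj := modObj F p0 B
  map {p q} φ := (modIso F p0 B f p).inv ≫ F.map φ ≫ (modIso F p0 B f q).hom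
  map_id p := by simp
  map_comp φ ψ := by simp

/-- The natural isomorphism `F ≅ modFunctor F p0 B f`. -/
def modNatIso (F : J ⥤ D) (p0 : J) (B : D) (f : F.obj p0 ≅ B) :
    F ≅ modFunctor F p0 B f :=
  NatIso.ofComponents (modIso F p0 B f) (by intros; simp [modFunctor])

end Aux

theorem sCat_eval_isofibration (W : CategoryWithCofibrations C) (m : ℕ)
    (q : Fin (m + 1)) (hq : 0 < q) (A : SCat W m) (B : C)
    (f : A.obj.obj ⟨(0, q), Fin.zero_le q⟩ ≅ B) :
    ∃ (B' : SCat W m) (g : A ≅ B') (h : B'.obj.obj ⟨(0, q), Fin.zero_le q⟩ = B),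
      g.hom.hom.app ⟨(0, q), Fin.zero_le q⟩ ≫ eqToHom h = f.hom := by
  let p0 : ArrPoset m := ⟨(0, q), Fin.zero_le q⟩
  have hSF : IsSFunctor W (modFunctor A.obj p0 B f) := by
    constructor
    · intro j
      exact (A.property.1 j).of_iso (modIso A.obj p0 B f _).symm
    · intro i j k hij hjk
      have hc := (A.property.2 i j k hij hjk).1
      have hp := (A.property.2 i j k hij hjk).2
      constructor
      · exact W.cof_comp _ _ (W.cof_of_isIso _ (Iso.isIso_inv _))
          (W.cof_comp _ _ hc (W.cof_of_isIso _ (Iso.isIso_hom _)))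
      · exact hp.of_iso (modIso A.obj p0 B f _) (modIso A.obj p0 B f _)
          (modIso A.obj p0 B f _) (modIso A.obj p0 B f _)
          (by simp [modFunctor]) (by simp [modFunctor])
          (by simp [modFunctor]) (by simp [modFunctor])
  let e := modNatIso A.obj p0 B f
  refine ⟨⟨modFunctor A.obj p0 B f, hSF⟩,
    ObjectProperty.isoMk _ e, ?_, ?_⟩
  · simp [modFunctor, modObj, p0]
  · show (modIso A.obj p0 B f p0).hom ≫ _ = _
    rw [modIso, dif_pos rfl]
    simp only [Iso.trans_hom, eqToIso.hom, eqToHom_refl, Category.id_comp, Category.assoc,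
      eqToHom_trans, Category.comp_id]
    refine (Category.assoc _ _ _).trans ?_
    exact (congrArg (f.hom ≫ ·) (eqToHom_trans _ _)).trans (by simp)
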